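/- Let J be a compact subset of a metric space that is uniformly perfect with constants η̂ > 1 and r̂ > 0 (i.e., for each x ∈ J and each r ∈ (0, r̂) the annulus B(x, η̂ r) \ B(x, r) intersects J), and let ρ be a doubling measure supported on J with doubling constants C* and r*. Then there exist η₀ > 1, ε₀ ∈ (0,1) and r₀ > 0 such that for every r ∈ (0, r₀) and every x ∈ J, ρ(B(x, η₀ r) \ B(x, r)) ≥ ε₀ ρ(B(x, r)). -/

import Mathlib

open MeasureTheory Metric ENNReal

/-- For a doubling measure supported on a uniformly perfect compact set `J`,
annuli carry a definite proportion of the measure of the inner ball. -/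
theorem stmt1 {X : Type*} [MetricSpace X] [MeasurableSpace X] [BorelSpace X]
    (J : Set X) (hJ : IsCompact J)
    (ρ : Measure X) (hsupp : ρ Jᶜ = 0)
    (Cs rs : ℝ) (hCs : 0 < Cs) (hrs : 0 < rs)
    (hdoub : ∀ x ∈ J, ∀ r : ℝ, 0 < r → r < rs →
      ρ (ball x (2 * r)) ≤ ENNReal.ofReal Cs * ρ (ball x r))
    (etaH rH : ℝ) (hetaH : 1 < etaH) (hrH : 0 < rH)
    (hup : ∀ x ∈ J, ∀ r : ℝ, 0 < r → r < rH →
      ((ball x (etaH * r) \ ball x r) ∩ J).Nonempty) :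
    ∃ η₀ > (1 : ℝ), ∃ ε₀ : ℝ, 0 < ε₀ ∧ ε₀ < 1 ∧ ∃ r₀ > (0 : ℝ),
      ∀ r : ℝ, 0 < r → r < r₀ → ∀ x ∈ J,
        ENNReal.ofReal ε₀ * ρ (ball x r) ≤ ρ (ball x (η₀ * r) \ ball x r) := by
  set C : ℝ := max Cs 1 with hCdef
  have hC1 : (1:ℝ) ≤ C := le_max_right _ _
  have hC0 : (0:ℝ) < C := lt_of_lt_of_le one_pos hC1
  have hdoub' : ∀ y ∈ J, ∀ s : ℝ, 0 < s → s < rs →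
      ρ (ball y (2 * s)) ≤ ENNReal.ofReal C * ρ (ball y s) := by
    intro y hy s hs hs'
    exact (hdoub y hy s hs hs').trans
      (mul_le_mul_left (ENNReal.ofReal_le_ofReal (le_max_left _ _)) _)
  have hiter : ∀ n : ℕ, ∀ y ∈ J, ∀ s : ℝ, 0 < s → 2 ^ n * s < 2 * rs →
      ρ (ball y (2 ^ n * s)) ≤ (ENNReal.ofReal C) ^ n * ρ (ball y s) := by
    intro n
    induction n with
    | zero => intro y hy s hs h; simp
    | succ n ih =>
      intro y hy s hs h
      have hpow : (0:ℝ) < 2 ^ n := by positivity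
      have hs2 : (0:ℝ) < 2 ^ n * s := by positivity
      have hps : (2:ℝ) ^ (n+1) = 2 ^ n * 2 := pow_succ 2 n
      have hlt : 2 ^ n * s < rs := by nlinarith
      have h1 : ρ (ball y (2 ^ (n+1) * s)) ≤ ENNReal.ofReal C * ρ (ball y (2 ^ n * s)) := by
        have := hdoub' y hy (2 ^ n * s) hs2 hlt
        rw [show (2:ℝ) ^ (n+1) * s = 2 * (2 ^ n * s) by rw [hps]; ring]
        exact this
      have h2 : ρ (ball y (2 ^ n * s)) ≤ (ENNReal.ofReal C) ^ n * ρ (ball y s) := by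
        apply ih y hy s hs
        nlinarith
      calc ρ (ball y (2 ^ (n+1) * s)) ≤ ENNReal.ofReal C * ρ (ball y (2 ^ n * s)) := h1
        _ ≤ ENNReal.ofReal C * ((ENNReal.ofReal C) ^ n * ρ (ball y s)) := by gcongr
        _ = (ENNReal.ofReal C) ^ (n+1) * ρ (ball y s) := by ring
  obtain ⟨k, hk⟩ : ∃ k : ℕ, 2 * etaH + 1 < 2 ^ k :=
    pow_unbounded_of_one_lt (2 * etaH + 1) (by norm_num : (1:ℝ) < 2)
  have hpk : (0:ℝ) < 2 ^ k := by positivity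
  have hCk : (0:ℝ) < C ^ k := by positivity
  have hCk1 : (1:ℝ) ≤ C ^ k := one_le_pow₀ hC1
  refine ⟨2 * etaH + 1, by nlinarith, 1 / (2 * C ^ k), by positivity, ?_,
    min (2 * rs / 2 ^ k) (rH / 2), lt_min (by positivity) (by positivity), ?_⟩
  · rw [div_lt_one (by positivity)]; nlinarith
  intro r hr hr' x hx
  have hr1 : 2 ^ k * r < 2 * rs := by
    have := lt_of_lt_of_le hr' (min_le_left _ _)
    rw [lt_div_iff₀ hpk] at this; nlinarith
  have hr2 : 2 * r < rH := by
    have := lt_of_lt_of_le hr' (min_le_right _ _)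
    nlinarith
  obtain ⟨y, ⟨hy1, hy2⟩, hyJ⟩ := hup x hx (2 * r) (by positivity) hr2
  rw [mem_ball, dist_comm] at hy1
  rw [mem_ball, dist_comm] at hy2
  push_neg at hy2
  -- ball y r ⊆ annulus
  have hsub1 : ball y r ⊆ ball x ((2 * etaH + 1) * r) \ ball x r := by
    intro z hz
    rw [mem_ball] at hz
    constructor
    · rw [mem_ball]
      calc dist z x ≤ dist z y + dist y x := dist_triangle _ _ _
        _ < r + etaH * (2 * r) := by rw [dist_comm y x]; linarith
        _ = (2 * etaH + 1) * r := by ring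
    · simp only [mem_ball, not_lt]
      have h3 := dist_triangle x z y
      rw [dist_comm z x]
      linarith
  -- ball x r ⊆ ball y (2^k * r)
  have hsub2 : ball x r ⊆ ball y (2 ^ k * r) := by
    intro z hz
    rw [mem_ball] at hz ⊢
    calc dist z y ≤ dist z x + dist x y := dist_triangle _ _ _
      _ < r + etaH * (2 * r) := by linarith
      _ ≤ 2 ^ k * r := by nlinarith
  have key : ρ (ball x r) ≤ (ENNReal.ofReal C) ^ k * ρ (ball x ((2 * etaH + 1) * r) \ ball x r) :=
    calc ρ (ball x r) ≤ ρ (ball y (2 ^ k * r)) := measure_mono hsub2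
      _ ≤ (ENNReal.ofReal C) ^ k * ρ (ball y r) := hiter k y hyJ r hr hr1
      _ ≤ (ENNReal.ofReal C) ^ k * ρ (ball x ((2 * etaH + 1) * r) \ ball x r) := by
          exact mul_le_mul_right (measure_mono hsub1) _
  calc ENNReal.ofReal (1 / (2 * C ^ k)) * ρ (ball x r)
      ≤ ENNReal.ofReal (1 / (2 * C ^ k)) *
        ((ENNReal.ofReal C) ^ k * ρ (ball x ((2 * etaH + 1) * r) \ ball x r)) := by gcongr
    _ = ENNReal.ofReal (1 / (2 * C ^ k) * C ^ k) * ρ (ball x ((2 * etaH + 1) * r) \ ball x r) := by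
        rw [← ENNReal.ofReal_pow hC0.le, ← mul_assoc, ← ENNReal.ofReal_mul (by positivity)]
    _ ≤ 1 * ρ (ball x ((2 * etaH + 1) * r) \ ball x r) := by
        gcongr
        rw [show 1 / (2 * C ^ k) * C ^ k = 1/2 by field_simp]
        exact ENNReal.ofReal_le_one.mpr (by norm_num)
    _ = _ := one_mul _
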